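/- Let F be a finite field of odd characteristic, V = W' ⊕ W a polarization of a symplectic F-space, and τ̂ a nontrivial additive character of F. The formulas (π(u,s)f)(w) = s·τ̂(2⁻¹⟨u₋,u₊⟩ + ⟨w,u₊⟩)·f(w+u₋), where u = u₋+u₊ with u₋ ∈ W', u₊ ∈ W, define a representation of the Heisenberg group H(V) on the space of complex-valued functions on W', in which the central element (0,s) acts by the scalar s. -/

import Mathlib

/-- Schrödinger representation: with a polarization `V = W' ⊕ W` of a symplectic
space, the formula `(π(u,s)f)(w) = s·τ̂(2⁻¹⟨u₋,u₊⟩+⟨w,u₊⟩)·f(w+u₋)` defines a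
representation of the Heisenberg group `H(V)` on functions on `W'`, in which the
central element `(0,s)` acts by the scalar `s`. -/
theorem schrodinger_representation {F : Type*} [Field F] [Fintype F]
    (hodd : ringChar F ≠ 2)
    {V : Type*} [AddCommGroup V] [Module F V]
    (ω : V →ₗ[F] V →ₗ[F] F)
    (halt : ∀ v : V, ω v v = 0)
    (W' W : Submodule F V) (hc : IsCompl W' W)
    (hW' : ∀ x ∈ W', ∀ y ∈ W', ω x y = 0)
    (hW : ∀ x ∈ W, ∀ y ∈ W, ω x y = 0)
    (τ : AddChar F Circle) (hτ : ∃ a : F, τ a ≠ 1) :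
    let mulH : V × Circle → V × Circle → V × Circle :=
      fun p q => (p.1 + q.1, p.2 * q.2 * τ ((2 : F)⁻¹ * ω p.1 q.1))
    let pr : V →ₗ[F] W' := Submodule.linearProjOfIsCompl W' W hc
    let ρ : V × Circle → (W' → ℂ) → (W' → ℂ) :=
      fun p f w => (p.2 : ℂ) *
        ((τ ((2 : F)⁻¹ * ω (pr p.1) (p.1 - pr p.1) + ω (w : V) (p.1 - pr p.1)) : Circle) : ℂ) *
        f (w + pr p.1)
    (∀ p q f, ρ (mulH p q) f = ρ p (ρ q f)) ∧
    (∀ (s : Circle) (f : W' → ℂ) (w : W'), ρ ((0 : V), s) f w = (s : ℂ) * f w) := by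
  intro mulH pr ρ
  have skew : ∀ x y : V, ω x y + ω y x = 0 := by
    intro x y
    have h := halt (x + y)
    simp only [map_add, LinearMap.add_apply, halt x, halt y] at h
    linear_combination h
  have hmem : ∀ x : V, x - (pr x : V) ∈ W := by
    intro x
    have h : (pr x : V) + (W.projectionOnto W' hc.symm x : V) = x :=
      Submodule.projection_add_projection_eq_self hc x
    rw [sub_eq_of_eq_add' h.symm]; exact Subtype.coe_prop _
  constructor
  · intro p q f
    funext w
    show (↑(p.2 * q.2 * τ ((2 : F)⁻¹ * ω p.1 q.1)) : ℂ) *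
        ((τ ((2 : F)⁻¹ * ω (pr (p.1 + q.1)) ((p.1 + q.1) - pr (p.1 + q.1))
          + ω (w : V) ((p.1 + q.1) - pr (p.1 + q.1))) : Circle) : ℂ) *
        f (w + pr (p.1 + q.1)) = _
    have prsum : pr (p.1 + q.1) = pr p.1 + pr q.1 := map_add pr p.1 q.1
    rw [prsum]
    set a : V := (pr p.1 : V) with ha
    set c : V := (pr q.1 : V) with hc2
    have key : (2 : F)⁻¹ * ω p.1 q.1 +
        ((2 : F)⁻¹ * ω ((pr p.1 + pr q.1 : W') : V) ((p.1 + q.1) - ((pr p.1 + pr q.1 : W') : V))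
          + ω (w : V) ((p.1 + q.1) - ((pr p.1 + pr q.1 : W') : V))) =
        ((2 : F)⁻¹ * ω a (p.1 - a) + ω (w : V) (p.1 - a))
        + ((2 : F)⁻¹ * ω c (q.1 - c) + ω ((w + pr p.1 : W') : V) (q.1 - c)) := by
      have hac : ω a c = 0 := hW' a (pr p.1).2 c (pr q.1).2
      have hbd : ω (p.1 - a) (q.1 - c) = 0 := hW _ (hmem p.1) _ (hmem q.1)
      have hbc : ω (p.1 - a) c + ω c (p.1 - a) = 0 := skew _ _
      have hpq : p.1 = a + (p.1 - a) := by abel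
      have hqq : q.1 = c + (q.1 - c) := by abel
      have e1 : ω p.1 q.1 = ω a (q.1 - c) + ω (p.1 - a) c := by
        calc ω p.1 q.1 = ω (a + (p.1 - a)) (c + (q.1 - c)) := by rw [← hpq, ← hqq]
        _ = ω a c + ω a (q.1 - c) + ω (p.1 - a) c + ω (p.1 - a) (q.1 - c) := by
            simp only [map_add, LinearMap.add_apply]; ring
        _ = _ := by rw [hac, hbd]; ring
      have hsum : ((pr p.1 + pr q.1 : W') : V) = a + c := rfl
      have hsub : (p.1 + q.1) - ((pr p.1 + pr q.1 : W') : V) = (p.1 - a) + (q.1 - c) := by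
        rw [hsum]; abel
      rw [hsub, hsum]
      simp only [map_add, LinearMap.add_apply, Submodule.coe_add]
      have hca : ω c (p.1 - a) = - ω (p.1 - a) c := by linear_combination hbc
      rw [e1, hca]
      have h2 : (2 : F) ≠ 0 := Ring.two_ne_zero hodd
      rw [← ha]
      field_simp
      ring
    have T : ((τ ((2 : F)⁻¹ * ω p.1 q.1) : Circle) : ℂ) *
        ((τ ((2 : F)⁻¹ * ω ((pr p.1 + pr q.1 : W') : V) ((p.1 + q.1) - ((pr p.1 + pr q.1 : W') : V))
          + ω (w : V) ((p.1 + q.1) - ((pr p.1 + pr q.1 : W') : V))) : Circle) : ℂ) =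
        ((τ ((2 : F)⁻¹ * ω a (p.1 - a) + ω (w : V) (p.1 - a)) : Circle) : ℂ) *
        ((τ ((2 : F)⁻¹ * ω c (q.1 - c) + ω ((w + pr p.1 : W') : V) (q.1 - c)) : Circle) : ℂ) := by
      rw [← Circle.coe_mul, ← Circle.coe_mul, ← AddChar.map_add_eq_mul, ← AddChar.map_add_eq_mul,
        key]
    show _ = (p.2 : ℂ) * _ * ((q.2 : ℂ) * _ * f ((w + pr p.1) + pr q.1))
    rw [Circle.coe_mul, Circle.coe_mul]
    have harg : w + (pr p.1 + pr q.1) = (w + pr p.1) + pr q.1 := by abel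
    rw [harg]
    linear_combination ((p.2 : ℂ) * (q.2 : ℂ) * f ((w + pr p.1) + pr q.1)) * T
  · intro s f w
    show (s : ℂ) * _ * f (w + pr 0) = _
    simp
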